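/- Define F(l,l') = x₁x + … + x_l x^l + y₁y + … + y_{l'}y^{l'} over ℤ[x₁,…,x_l,y₁,…,y_{l'}], and let f_h(l,l',k) be the coefficient of x^h in F(l,l',k), where F(l,l',k) is obtained from F(l,l')^k by substituting x^i y^j ↦ y^{i+j} for i,j ≥ 1. Then for k ≥ 2: if h ≤ k−1 then f_h(l,l',k) = 0, and if h > k−1 then f_h(l,l',k) is a homogeneous polynomial of degree k in the variables x₁,…,x_{min{l, h−k+1}}. -/

import Mathlib

open MvPolynomial

lemma prod_monomial_aux {σ R τ : Type*} [CommSemiring R] (s : Finset τ)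
    (e : τ → (σ →₀ ℕ)) (c : τ → R) :
    (∏ t ∈ s, MvPolynomial.monomial (e t) (c t)) =
      MvPolynomial.monomial (∑ t ∈ s, e t) (∏ t ∈ s, c t) := by
  classical
  induction s using Finset.cons_induction with
  | empty => simp [MvPolynomial.monomial_zero']
  | cons a s ha ih =>
      rw [Finset.prod_cons, Finset.sum_cons, Finset.prod_cons, ih, MvPolynomial.monomial_mul]

/-- `F(l,l') = x₁x + … + x_l x^l + y₁y + … + y_{l'} y^{l'}`, viewed as a
polynomial in two variables `x = X 0`, `y = X 1` with coefficients in
`ℤ[x₁,…,x_l,y₁,…,y_{l'}]`. -/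
noncomputable def Fpoly (l l' : ℕ) :
    MvPolynomial (Fin 2) (MvPolynomial (Fin l ⊕ Fin l') ℤ) :=
  (∑ i : Fin l,
      MvPolynomial.C (MvPolynomial.X (Sum.inl i)) * MvPolynomial.X 0 ^ ((i : ℕ) + 1)) +
  ∑ j : Fin l',
      MvPolynomial.C (MvPolynomial.X (Sum.inr j)) * MvPolynomial.X 1 ^ ((j : ℕ) + 1)

/-- `f_h(l,l',k)`: the coefficient of `x^h` in `F(l,l',k)`, where `F(l,l',k)`
is obtained from `F(l,l')^k` by the substitution `x^i y^j ↦ y^{i+j}` for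
`i, j ≥ 1`.  Since that substitution produces no pure powers of `x`, this is
the coefficient of the monomial `x^h y^0` in `F(l,l')^k`. -/
noncomputable def fCoeff (l l' k h : ℕ) : MvPolynomial (Fin l ⊕ Fin l') ℤ :=
  MvPolynomial.coeff (Finsupp.single 0 h) (Fpoly l l' ^ k)

/-- For `k ≥ 2`: if `h ≤ k − 1` then `f_h(l,l',k) = 0`, and if `h > k − 1` then
`f_h(l,l',k)` is a homogeneous polynomial of degree `k` in the variables
`x₁, …, x_{min l (h−k+1)}`. -/
theorem fCoeff_vanish_or_homogeneous (l l' : ℕ) (hl : 1 ≤ l) (hl' : 1 ≤ l')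
    (k h : ℕ) (hk : 2 ≤ k) :
    (h ≤ k - 1 → fCoeff l l' k h = 0) ∧
    (k - 1 < h →
      (fCoeff l l' k h).IsHomogeneous k ∧
      ∀ v ∈ (fCoeff l l' k h).vars,
        ∃ i : Fin l, v = Sum.inl i ∧ (i : ℕ) + 1 ≤ min l (h - k + 1)) := by
  classical
  set R := MvPolynomial (Fin l ⊕ Fin l') ℤ with hR
  set ee : (Fin l ⊕ Fin l') → (Fin 2 →₀ ℕ) :=
    Sum.elim (fun i => Finsupp.single 0 ((i : ℕ) + 1))
      (fun j => Finsupp.single 1 ((j : ℕ) + 1)) with hee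
  have hFp : Fpoly l l' =
      ∑ s : Fin l ⊕ Fin l', MvPolynomial.monomial (ee s) (MvPolynomial.X s) := by
    rw [Fpoly, Fintype.sum_sum_type]
    congr 1 <;> refine Finset.sum_congr rfl fun i _ => ?_ <;>
      simp [hee, MvPolynomial.X_pow_eq_monomial, MvPolynomial.C_mul_monomial]
  have hX : ∀ s : Fin l ⊕ Fin l', (MvPolynomial.X s : R)
      = MvPolynomial.monomial (Finsupp.single s 1) (1 : ℤ) := fun s => rfl
  have expand : fCoeff l l' k h =
      ∑ p : Fin k → (Fin l ⊕ Fin l'),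
        if (∑ t, ee (p t)) = Finsupp.single 0 h then
          MvPolynomial.monomial (∑ t : Fin k, Finsupp.single (p t) 1) (1 : ℤ)
        else 0 := by
    rw [fCoeff, hFp, Fintype.sum_pow, MvPolynomial.coeff_sum]
    refine Finset.sum_congr rfl fun p _ => ?_
    rw [prod_monomial_aux, MvPolynomial.coeff_monomial]
    split
    · simp only [hX]
      rw [prod_monomial_aux]
      simp
    · rfl
  have key : ∀ p : Fin k → (Fin l ⊕ Fin l'),
      (∑ t, ee (p t)) = Finsupp.single 0 h →
      ∃ q : Fin k → Fin l, (∀ t, p t = Sum.inl (q t)) ∧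
        (∑ t : Fin k, ((q t : ℕ) + 1)) = h := by
    intro p hp
    have h1 : ∀ t, ∃ i, p t = Sum.inl i := by
      intro t
      cases hpt : p t with
      | inl i => exact ⟨i, rfl⟩
      | inr j =>
          exfalso
          have h1' := DFunLike.congr_fun hp (1 : Fin 2)
          rw [Finsupp.finset_sum_apply] at h1'
          have hz : (Finsupp.single (0 : Fin 2) h) 1 = 0 := by
            simp [Finsupp.single_apply]
          rw [hz] at h1'
          have hmem := Finset.sum_eq_zero_iff.mp h1' t (Finset.mem_univ t)
          rw [hpt] at hmem
          simp [hee] at hmem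
    choose q hq using h1
    refine ⟨q, hq, ?_⟩
    have h0 := DFunLike.congr_fun hp (0 : Fin 2)
    rw [Finsupp.finset_sum_apply] at h0
    have : ∀ t : Fin k, (ee (p t)) 0 = (q t : ℕ) + 1 := by
      intro t; rw [hq t]; simp [hee]
    simp only [this] at h0
    simpa using h0
  have hsum_ge : ∀ q : Fin k → Fin l, (k : ℕ) ≤ ∑ t : Fin k, ((q t : ℕ) + 1) := by
    intro q
    calc (k : ℕ) = ∑ _t : Fin k, 1 := by simp
    _ ≤ ∑ t : Fin k, ((q t : ℕ) + 1) :=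
      Finset.sum_le_sum fun t _ => Nat.le_add_left 1 _
  constructor
  · intro hh
    have hhk : h < k := lt_of_le_of_lt hh (by omega)
    rw [expand]
    refine Finset.sum_eq_zero fun p _ => ?_
    rw [if_neg]
    intro hcond
    obtain ⟨q, _, hq2⟩ := key p hcond
    have := hsum_ge q
    omega
  · intro hh
    have hhk : k ≤ h := by omega
    constructor
    · rw [expand]
      apply MvPolynomial.IsHomogeneous.sum
      intro p _
      split
      · apply MvPolynomial.isHomogeneous_monomial
        have : (∑ t : Fin k, Finsupp.single (p t) 1).degree
            = ∑ t : Fin k, (Finsupp.single (p t) 1).degree := by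
          simp only [Finsupp.degree_eq_weight_one, map_sum]
        rw [this]
        have hd1 : ∀ t : Fin k, (Finsupp.single (p t) 1).degree = 1 := by
          intro t
          exact Finsupp.degree_single _ _
        simp [hd1]
      · exact MvPolynomial.isHomogeneous_zero _ _ _
    · intro v hv
      rw [expand] at hv
      have hv' := MvPolynomial.vars_sum_subset _ _ hv
      rw [Finset.mem_biUnion] at hv'
      obtain ⟨p, -, hvp⟩ := hv'
      by_cases hcond : (∑ t, ee (p t)) = Finsupp.single 0 h
      · rw [if_pos hcond] at hvp
        rw [MvPolynomial.vars_monomial (one_ne_zero)] at hvp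
        have hvp' := Finsupp.mem_support_finset_sum _ hvp
        obtain ⟨t, -, hvt⟩ := hvp'
        have : v = p t := by
          have := Finsupp.support_single_subset hvt
          simpa using this
        obtain ⟨q, hq1, hq2⟩ := key p hcond
        refine ⟨q t, by rw [this, hq1 t], ?_⟩
        have hrest : (k - 1 : ℕ) ≤ ∑ t' ∈ Finset.univ.erase t, ((q t' : ℕ) + 1) := by
          calc (k - 1 : ℕ) = ∑ _t' ∈ Finset.univ.erase t, 1 := by
                simp [Finset.card_erase_of_mem]
          _ ≤ _ := Finset.sum_le_sum fun t' _ => Nat.le_add_left 1 _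
        have hsplit : ((q t : ℕ) + 1) + ∑ t' ∈ Finset.univ.erase t, ((q t' : ℕ) + 1) = h := by
          rw [← hq2]
          exact Finset.add_sum_erase _ (fun t' => (q t' : ℕ) + 1) (Finset.mem_univ t)
        have hql : (q t : ℕ) < l := (q t).isLt
        omega
      · rw [if_neg hcond] at hvp
        simp at hvp
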